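/- Let k be a field, d ≥ 1, and let R = ⊕_{a ∈ ℤ^d} R_a be a commutative k-algebra graded by ℤ^d which is an integral domain and satisfies dim_k R_a ≤ 1 for every a ∈ ℤ^d. Then S := {a ∈ ℤ^d : R_a ≠ 0} is an additive submonoid of ℤ^d, and R is isomorphic as a k-algebra to the monoid algebra k[S] of S over k, via an isomorphism that for each a ∈ S carries R_a onto the line spanned by the basis element of k[S] indexed by a. -/

import Mathlib

theorem aux_rk {k R : Type} [Field k] [CommRing R] [Algebra k R]
    {d : ℕ} (𝒜 : (Fin d → ℤ) → Submodule k R)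
    (hone : ∀ a : Fin d → ℤ, Module.rank k ↥(𝒜 a) ≤ 1) :
    ∀ (b : Fin d → ℤ) (x y : R), x ∈ 𝒜 b → y ∈ 𝒜 b → y ≠ 0 → ∃ c : k, x = c • y := by
  intro b x y hx hy hy0
  obtain ⟨v₀, hv₀⟩ := rank_le_one_iff.mp (hone b)
  obtain ⟨c₁, hc₁⟩ := hv₀ ⟨x, hx⟩
  obtain ⟨c₂, hc₂⟩ := hv₀ ⟨y, hy⟩
  have hc₂0 : c₂ ≠ 0 := by
    rintro rfl
    apply hy0
    have := hc₂.symm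
    rw [zero_smul] at this
    exact congrArg Subtype.val this
  refine ⟨c₁ * c₂⁻¹, ?_⟩
  have hx' : x = c₁ • (v₀ : R) := by
    have := congrArg Subtype.val hc₁; simpa using this.symm
  have hy' : y = c₂ • (v₀ : R) := by
    have := congrArg Subtype.val hc₂; simpa using this.symm
  rw [hx', hy', smul_smul, mul_assoc, inv_mul_cancel₀ hc₂0, mul_one]

theorem aux_add {k R : Type} [Field k] [CommRing R] [IsDomain R] [Algebra k R]
    {d : ℕ} (𝒜 : (Fin d → ℤ) → Submodule k R) [GradedAlgebra 𝒜] :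
    ∀ a b : Fin d → ℤ, 𝒜 a ≠ ⊥ → 𝒜 b ≠ ⊥ → 𝒜 (a + b) ≠ ⊥ := by
  intro a b ha hb
  obtain ⟨x, hx, hx0⟩ := (Submodule.ne_bot_iff _).mp ha
  obtain ⟨y, hy, hy0⟩ := (Submodule.ne_bot_iff _).mp hb
  exact (Submodule.ne_bot_iff _).mpr ⟨x * y, SetLike.mul_mem_graded hx hy, mul_ne_zero hx0 hy0⟩

set_option synthInstance.maxHeartbeats 1000000 in
set_option maxHeartbeats 1000000 in
theorem aux_sec {k R : Type} [Field k] [CommRing R] [IsDomain R] [Algebra k R]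
    {d : ℕ} (𝒜 : (Fin d → ℤ) → Submodule k R) [GradedAlgebra 𝒜]
    (hone : ∀ a : Fin d → ℤ, Module.rank k ↥(𝒜 a) ≤ 1) :
    ∃ e : (Fin d → ℤ) → R,
      e 0 = 1 ∧
      (∀ a, e a ∈ 𝒜 a) ∧
      (∀ a, 𝒜 a ≠ ⊥ → e a ≠ 0) ∧
      (∀ a b, 𝒜 a ≠ ⊥ → 𝒜 b ≠ ⊥ → e a * e b = e (a + b)) := by
  classical
  set K := FractionRing R with hK
  have hι : Function.Injective ⇑(algebraMap R K) := IsFractionRing.injective R K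
  -- the subgroup of "homogeneous fractions with their degree"
  set T : AddSubgroup (Additive Kˣ × (Fin d → ℤ)) :=
    { carrier := {p | ∃ b c : Fin d → ℤ, ∃ x y : R, x ∈ 𝒜 b ∧ y ∈ 𝒜 c ∧ y ≠ 0 ∧
        ((Additive.toMul p.1 : Kˣ) : K) * algebraMap R K y = algebraMap R K x ∧ p.2 = b - c}
      zero_mem' := ⟨0, 0, 1, 1, SetLike.one_mem_graded 𝒜, SetLike.one_mem_graded 𝒜,
        one_ne_zero, by simp, by simp⟩
      add_mem' := by
        rintro p q ⟨b, c, x, y, hx, hy, hy0, heq, h2⟩ ⟨b', c', x', y', hx', hy', hy0', heq', h2'⟩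
        refine ⟨b + b', c + c', x * x', y * y', SetLike.mul_mem_graded hx hx',
          SetLike.mul_mem_graded hy hy', mul_ne_zero hy0 hy0', ?_, ?_⟩
        · show ((Additive.toMul (p.1 + q.1) : Kˣ) : K) * _ = _
          have : ((Additive.toMul (p.1 + q.1) : Kˣ) : K)
              = ((Additive.toMul p.1 : Kˣ) : K) * ((Additive.toMul q.1 : Kˣ) : K) := by
            simp
          rw [this, map_mul, map_mul, ← heq, ← heq']
          ring
        · show p.2 + q.2 = _
          rw [h2, h2']; abel
      neg_mem' := by
        rintro p ⟨b, c, x, y, hx, hy, hy0, heq, h2⟩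
        have hx0 : x ≠ 0 := by
          intro h
          rw [h, map_zero] at heq
          exact (Units.ne_zero _) (by
            have hy' : algebraMap R K y ≠ 0 := fun hz => hy0 (hι (by simpa using hz))
            exact (mul_eq_zero.mp heq).resolve_right hy')
        refine ⟨c, b, y, x, hy, hx, hx0, ?_, ?_⟩
        · show ((Additive.toMul (-p.1) : Kˣ) : K) * _ = _
          have : ((Additive.toMul (-p.1) : Kˣ) : K) = (((Additive.toMul p.1)⁻¹ : Kˣ) : K) := by
            simp
          rw [this, ← heq]
          rw [Units.val_inv_eq_inv_val]
          exact inv_mul_cancel_left₀ (Units.ne_zero _) _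
        · show -p.2 = _
          rw [h2]; abel } with hT
  have hT1 : ∀ (a : Fin d → ℤ) (x : R) (hx : x ∈ 𝒜 a) (hx0 : x ≠ 0),
      ∀ u : Kˣ, (u : K) = algebraMap R K x → (Additive.ofMul u, a) ∈ T := by
    intro a x hx hx0 u hu
    refine ⟨a, 0, x, 1, hx, SetLike.one_mem_graded 𝒜, one_ne_zero, ?_, by simp⟩
    simp [hu]
  -- elements with nonzero piece map into T
  have htex : ∀ a : Fin d → ℤ, 𝒜 a ≠ ⊥ → ∃ x, x ∈ 𝒜 a ∧ x ≠ 0 :=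
    fun a ha => (Submodule.ne_bot_iff _).mp ha
  choose t htmem htne using htex
  have htK : ∀ a (ha : 𝒜 a ≠ ⊥), algebraMap R K (t a ha) ≠ 0 :=
    fun a ha hz => htne a ha (hι (by simpa using hz))
  set G : Submodule ℤ (Fin d → ℤ) :=
    AddSubgroup.toIntSubmodule (AddSubgroup.closure {a : Fin d → ℤ | 𝒜 a ≠ ⊥}) with hGdef
  have hSG : ∀ a : Fin d → ℤ, 𝒜 a ≠ ⊥ → a ∈ G := fun a ha => AddSubgroup.subset_closure ha
  have hG : ∀ g : Fin d → ℤ, g ∈ G → ∃ u : Kˣ, (Additive.ofMul u, g) ∈ T := by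
    intro g hg
    have hD : AddSubgroup.closure {a : Fin d → ℤ | 𝒜 a ≠ ⊥}
        ≤ T.map (AddMonoidHom.snd (Additive Kˣ) (Fin d → ℤ)) := by
      rw [AddSubgroup.closure_le]
      intro a ha
      have hu := (Ne.isUnit (htK a ha)).unit_spec
      exact ⟨(Additive.ofMul (Ne.isUnit (htK a ha)).unit, a),
        hT1 a (t a ha) (htmem a ha) (htne a ha) _ hu, rfl⟩
    obtain ⟨p, hp, hp2⟩ := AddSubgroup.mem_map.mp (hD hg)
    refine ⟨Additive.toMul p.1, ?_⟩
    have : (Additive.ofMul (Additive.toMul p.1), g) = p := Prod.ext (by simp) hp2.symm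
    rw [this]; exact hp
  -- basis of G and the splitting F
  obtain ⟨n, bG⟩ := Submodule.basisOfPid (Pi.basisFun ℤ (Fin d)) G
  choose uB huB using fun i => hG (bG i) (bG i).2
  obtain ⟨F, hF⟩ : ∃ F : ↥G →ₗ[ℤ] ↥T,
      ∀ i, F (bG i) = ⟨(Additive.ofMul (uB i), ↑(bG i)), huB i⟩ :=
    ⟨bG.constr ℤ (fun i => ⟨(Additive.ofMul (uB i), ↑(bG i)), huB i⟩),
      fun i => bG.constr_basis ℤ _ i⟩
  have hF2 : ∀ g : ↥G, ((F g : Additive Kˣ × (Fin d → ℤ))).2 = (g : Fin d → ℤ) := by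
    have hL : ((LinearMap.snd ℤ (Additive Kˣ) (Fin d → ℤ)).comp
        ((T.subtype.toIntLinearMap).comp F)) = G.subtype := by
      apply bG.ext
      intro i
      simp [hF i]
    intro g
    have := DFunLike.congr_fun hL g
    simpa using this
  -- degree-zero elements of T are scalars
  have hdeg0 : ∀ u : Kˣ, (Additive.ofMul u, (0 : Fin d → ℤ)) ∈ T →
      ∃ c : k, c ≠ 0 ∧ (u : K) = algebraMap k K c := by
    rintro u ⟨b, c, x, y, hx, hy, hy0, heq, h2⟩
    replace heq : (u : K) * algebraMap R K y = algebraMap R K x := heq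
    have hbc : b = c := sub_eq_zero.mp h2.symm
    subst hbc
    have hy' : algebraMap R K y ≠ 0 := fun hz => hy0 (hι (by simpa using hz))
    have hx0 : x ≠ 0 := by
      intro h
      rw [h, map_zero] at heq
      exact (Units.ne_zero u) ((mul_eq_zero.mp heq).resolve_right hy')
    obtain ⟨cc, hcc⟩ := aux_rk 𝒜 hone b x y hx hy hy0
    have hcc0 : cc ≠ 0 := by
      rintro rfl
      rw [zero_smul] at hcc
      exact hx0 hcc
    refine ⟨cc, hcc0, ?_⟩
    have h3 : algebraMap R K x = algebraMap k K cc * algebraMap R K y := by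
      rw [hcc, Algebra.smul_def, map_mul, ← IsScalarTower.algebraMap_apply]
    have := heq.trans h3
    exact mul_right_cancel₀ hy' this
  -- normalize the chosen generators
  have hc : ∀ a (ha : 𝒜 a ≠ ⊥), ∃ c : k, c ≠ 0 ∧
      ((Additive.toMul ((F ⟨a, hSG a ha⟩ : ↥T) : Additive Kˣ × (Fin d → ℤ)).1 : Kˣ) : K)
        = algebraMap k K c * algebraMap R K (t a ha) := by
    intro a ha
    set w : Kˣ :=
      Additive.toMul ((F ⟨a, hSG a ha⟩ : ↥T) : Additive Kˣ × (Fin d → ℤ)).1 with hw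
    set u' : Kˣ := (Ne.isUnit (htK a ha)).unit with hu'
    have hq : (Additive.ofMul u', a) ∈ T :=
      hT1 a (t a ha) (htmem a ha) (htne a ha) _ (IsUnit.unit_spec _)
    have hpT := (F ⟨a, hSG a ha⟩).2
    have hdiff : (Additive.ofMul (w / u'), (0 : Fin d → ℤ)) ∈ T := by
      have hsub := T.sub_mem hpT hq
      have hEq : (Additive.ofMul (w / u'), (0 : Fin d → ℤ))
          = ((F ⟨a, hSG a ha⟩ : ↥T) : Additive Kˣ × (Fin d → ℤ)) - (Additive.ofMul u', a) := by
        apply Prod.ext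
        · show Additive.ofMul (w / u')
            = ((F ⟨a, hSG a ha⟩ : ↥T) : Additive Kˣ × (Fin d → ℤ)).1 - Additive.ofMul u'
          rw [ofMul_div, hw]
          rfl
        · show (0 : Fin d → ℤ)
            = ((F ⟨a, hSG a ha⟩ : ↥T) : Additive Kˣ × (Fin d → ℤ)).2 - a
          rw [hF2]
          simp
      rw [hEq]
      exact hsub
    obtain ⟨cc, hcc0, hcceq⟩ := hdeg0 _ hdiff
    refine ⟨cc, hcc0, ?_⟩
    have hwu : (w : K) / (u' : K) = algebraMap k K cc := by
      rw [← hcceq]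
      simp
    have : (w : K) = algebraMap k K cc * (u' : K) := by
      rw [← hwu]
      exact (div_mul_cancel₀ _ (Units.ne_zero _)).symm
    rw [this, IsUnit.unit_spec]
  choose cc hcc0 hcceq using hc
  set e : (Fin d → ℤ) → R := fun a => if ha : 𝒜 a ≠ ⊥ then cc a ha • t a ha else 0 with he
  have hemem : ∀ a, e a ∈ 𝒜 a := by
    intro a
    rw [he]
    dsimp only
    split
    · exact Submodule.smul_mem _ _ (htmem _ _)
    · exact Submodule.zero_mem _
  have hene : ∀ a, 𝒜 a ≠ ⊥ → e a ≠ 0 := by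
    intro a ha
    rw [he]
    dsimp only
    rw [dif_pos ha]
    exact smul_ne_zero (hcc0 a ha) (htne a ha)
  have heK : ∀ a (ha : 𝒜 a ≠ ⊥), algebraMap R K (e a)
      = ((Additive.toMul ((F ⟨a, hSG a ha⟩ : ↥T) : Additive Kˣ × (Fin d → ℤ)).1 : Kˣ) : K) := by
    intro a ha
    rw [he]
    dsimp only
    rw [dif_pos ha, Algebra.smul_def, map_mul, ← IsScalarTower.algebraMap_apply, hcceq a ha]
  have h0 : 𝒜 (0 : Fin d → ℤ) ≠ ⊥ :=
    (Submodule.ne_bot_iff _).mpr ⟨1, SetLike.one_mem_graded 𝒜, one_ne_zero⟩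
  refine ⟨e, ?_, hemem, hene, ?_⟩
  · apply hι
    rw [heK 0 h0, map_one]
    have hz : (⟨(0 : Fin d → ℤ), hSG 0 h0⟩ : ↥G) = 0 := Subtype.ext rfl
    rw [hz, map_zero]
    simp
  · intro a b ha hb
    have hab : 𝒜 (a + b) ≠ ⊥ := aux_add 𝒜 a b ha hb
    apply hι
    rw [map_mul, heK a ha, heK b hb, heK _ hab]
    have hz : (⟨a + b, hSG _ hab⟩ : ↥G) = ⟨a, hSG a ha⟩ + ⟨b, hSG b hb⟩ := Subtype.ext rfl
    rw [hz, map_add]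
    simp


set_option maxHeartbeats 1000000 in
/-- **Graded domains with one-dimensional pieces are monoid algebras**
(Proposition `prop-grA-semigp-algebra`).  If `R` is a `ℤ^d`-graded `k`-algebra which is a
domain and all of whose graded pieces have dimension at most `1`, then
`S = {a : 𝒜 a ≠ ⊥}` is an additive submonoid of `ℤ^d` and `R ≅ k[S]` via an isomorphism
carrying each graded piece `R_a` (for `a ∈ S`) onto the line spanned by the basis element of
`k[S]` indexed by `a`. -/
theorem stmt_1 {k R : Type} [Field k] [CommRing R] [IsDomain R] [Algebra k R]
    {d : ℕ} (hd : 1 ≤ d)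
    (𝒜 : (Fin d → ℤ) → Submodule k R) [GradedAlgebra 𝒜]
    (hone : ∀ a : Fin d → ℤ, Module.rank k ↥(𝒜 a) ≤ 1) :
    ∃ S : AddSubmonoid (Fin d → ℤ),
      (S : Set (Fin d → ℤ)) = {a : Fin d → ℤ | 𝒜 a ≠ ⊥} ∧
      ∃ φ : R ≃ₐ[k] AddMonoidAlgebra k ↥S,
        ∀ a : ↥S, ⇑φ '' ((𝒜 ↑a : Submodule k R) : Set R) =
          ((Submodule.span k {(AddMonoidAlgebra.single a (1 : k) : AddMonoidAlgebra k ↥S)} :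
            Submodule k (AddMonoidAlgebra k ↥S)) : Set (AddMonoidAlgebra k ↥S)) := by
  classical
  obtain ⟨e, he0, hemem, hene, hemul⟩ := aux_sec 𝒜 hone
  have h0 : 𝒜 (0 : Fin d → ℤ) ≠ ⊥ :=
    (Submodule.ne_bot_iff _).mpr ⟨1, SetLike.one_mem_graded 𝒜, one_ne_zero⟩
  refine ⟨{ carrier := {a : Fin d → ℤ | 𝒜 a ≠ ⊥}
            add_mem' := fun {a b} ha hb => aux_add 𝒜 a b ha hb
            zero_mem' := h0 }, rfl, ?_⟩
  set S : AddSubmonoid (Fin d → ℤ) :=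
    { carrier := {a : Fin d → ℤ | 𝒜 a ≠ ⊥}
      add_mem' := fun {a b} ha hb => aux_add 𝒜 a b ha hb
      zero_mem' := h0 } with hS
  have hmemS : ∀ a : ↥S, 𝒜 (a : Fin d → ℤ) ≠ ⊥ := fun a => a.2
  -- the algebra hom k[S] → R
  set E : Multiplicative ↥S →* R :=
    { toFun := fun a => e ((Multiplicative.toAdd a : ↥S) : Fin d → ℤ)
      map_one' := he0
      map_mul' := fun a b => (hemul _ _ (hmemS _) (hmemS _)).symm } with hE
  set ψ : AddMonoidAlgebra k ↥S →ₐ[k] R := (AddMonoidAlgebra.lift k R ↥S) E with hψ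
  have hψsingle : ∀ (a : ↥S) (r : k), ψ (AddMonoidAlgebra.single a r) = r • e ↑a := by
    intro a r
    rw [hψ]
    exact AddMonoidAlgebra.lift_single E a r
  -- injectivity
  have hind : LinearIndependent k (fun a : ↥S => e ↑a) := by
    have hii : iSupIndep (fun a : ↥S => 𝒜 ↑a) :=
      ((DirectSum.Decomposition.isInternal 𝒜).submodule_iSupIndep).comp Subtype.val_injective
    exact hii.linearIndependent (fun a : ↥S => 𝒜 ↑a) (fun a => hemem ↑a)
      (fun a => hene ↑a (hmemS a))
  have hψlin : ψ.toLinearMap = (Finsupp.linearCombination k (fun a : ↥S => e ↑a)).comp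
      (AddMonoidAlgebra.coeffLinearEquiv k).toLinearMap := by
    apply AddMonoidAlgebra.lhom_ext'
    intro a
    apply LinearMap.ext
    intro r
    show ψ (AddMonoidAlgebra.single a r) = Finsupp.linearCombination k _ (Finsupp.single a r)
    rw [hψsingle a r, Finsupp.linearCombination_single]
  have hinj : Function.Injective ⇑ψ := by
    have := (linearIndependent_iff_injective_finsuppLinearCombination.mp hind).comp
      (AddMonoidAlgebra.coeffLinearEquiv (S := k) (M := ↥S) k).injective
    change Function.Injective ⇑((Finsupp.linearCombination k (fun a : ↥S => e ↑a)).comp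
      (AddMonoidAlgebra.coeffLinearEquiv k).toLinearMap) at this
    rw [← hψlin] at this
    exact this
  have hsurj : Function.Surjective ⇑ψ := by
    intro x
    have htop : (⨆ a, 𝒜 a) = ⊤ :=
      (DirectSum.Decomposition.isInternal 𝒜).submodule_iSup_eq_top
    have hx : x ∈ Subalgebra.toSubmodule ψ.range := by
      have hle : (⨆ a, 𝒜 a) ≤ Subalgebra.toSubmodule ψ.range := by
        apply iSup_le
        intro a
        by_cases ha : 𝒜 a = ⊥
        · rw [ha]; exact bot_le
        · intro y hy
          obtain ⟨c', hc'⟩ := aux_rk 𝒜 hone a y (e a) hy (hemem a) (hene a ha)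
          refine ⟨AddMonoidAlgebra.single (⟨a, ha⟩ : ↥S) c', ?_⟩
          show ψ (AddMonoidAlgebra.single (⟨a, ha⟩ : ↥S) c') = y
          rw [hψsingle ⟨a, ha⟩ c', hc']
      exact hle (htop ▸ Submodule.mem_top)
    obtain ⟨y, hy⟩ := hx
    exact ⟨y, hy⟩
  set ε : R ≃ₐ[k] AddMonoidAlgebra k ↥S := (AlgEquiv.ofBijective ψ ⟨hinj, hsurj⟩).symm with hε
  have hεψ : ∀ z, ε (ψ z) = z := by
    intro z
    rw [hε]
    exact (AlgEquiv.ofBijective ψ ⟨hinj, hsurj⟩).symm_apply_apply z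
  refine ⟨ε, ?_⟩
  intro a
  ext y
  simp only [Set.mem_image, SetLike.mem_coe]
  constructor
  · rintro ⟨x, hx, rfl⟩
    obtain ⟨c', hc'⟩ := aux_rk 𝒜 hone ↑a x (e ↑a) hx (hemem ↑a) (hene ↑a (hmemS a))
    have : x = ψ (c' • AddMonoidAlgebra.single a 1) := by
      rw [map_smul, hψsingle a 1, one_smul, hc']
    rw [this, hεψ]
    exact Submodule.smul_mem _ _ (Submodule.mem_span_singleton_self _)
  · intro hy
    obtain ⟨c', hc'⟩ := Submodule.mem_span_singleton.mp hy
    refine ⟨c' • e ↑a, Submodule.smul_mem _ _ (hemem ↑a), ?_⟩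
    have : c' • e ↑a = ψ (c' • AddMonoidAlgebra.single a 1) := by
      rw [map_smul, hψsingle a 1, one_smul]
    rw [this, hεψ, hc']
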